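/- With v_λ as above (λ in the open unit ball of ℂⁿ), the linear functional ρ_λ(A) = ⟨A v_λ, v_λ⟩ on the norm-closed algebra generated by L₁, ..., Lₙ and the identity is multiplicative, and ρ_λ(Lᵢ) = λᵢ for each i. -/

import Mathlib

open ContinuousLinearMap in
set_option maxHeartbeats 1000000 in
/-- Auxiliary: the set of operators having `v` as an eigenvector of the adjoint contains
the norm-closed unital algebra generated by any set of such operators. -/
theorem aux_eig {E : Type*} [NormedAddCommGroup E] [InnerProductSpace ℂ E] [CompleteSpace E]
    (v : E) (hvv : (inner ℂ v v : ℂ) = 1) (s : Set (E →L[ℂ] E))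
    (hs : ∀ a ∈ s, adjoint a v = (inner ℂ v (adjoint a v) : ℂ) • v) :
    ∀ a ∈ (Algebra.adjoin ℂ s).topologicalClosure,
      adjoint a v = (inner ℂ v (adjoint a v) : ℂ) • v := by
  set S : Set (E →L[ℂ] E) := {a | adjoint a v = (inner ℂ v (adjoint a v) : ℂ) • v} with hSdef
  have key : ∀ (a : E →L[ℂ] E) (μ : ℂ), adjoint a v = μ • v → a ∈ S := by
    intro a μ h
    simp only [hSdef, Set.mem_setOf_eq, h, inner_smul_right, hvv, mul_one]
  have hSclosed : IsClosed S := by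
    have hc : Continuous fun a : E →L[ℂ] E => (adjoint a) v :=
      (ContinuousLinearMap.apply ℂ E v).continuous.comp
        (adjoint : (E →L[ℂ] E) ≃ₗᵢ⋆[ℂ] (E →L[ℂ] E)).continuous
    have hg : Continuous fun a : E →L[ℂ] E => ((inner ℂ v (adjoint a v) : ℂ)) • v :=
      (Continuous.inner continuous_const hc).smul continuous_const
    exact isClosed_eq hc hg
  let T : Subalgebra ℂ (E →L[ℂ] E) :=
  { carrier := S
    mul_mem' := by
      intro a b ha hb
      refine key _ ((inner ℂ v (adjoint a v) : ℂ) * (inner ℂ v (adjoint b v) : ℂ)) ?_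
      have hmul : adjoint (a * b) = adjoint b * adjoint a := by
        rw [← star_eq_adjoint, ← star_eq_adjoint, ← star_eq_adjoint, star_mul]
      have ha' : adjoint a v = (inner ℂ v (adjoint a v) : ℂ) • v := ha
      have hb' : adjoint b v = (inner ℂ v (adjoint b v) : ℂ) • v := hb
      rw [hmul]
      calc (adjoint b * adjoint a) v = adjoint b (adjoint a v) := rfl
        _ = (inner ℂ v (adjoint a v) : ℂ) • adjoint b v := by
              conv_lhs => rw [ha']
              rw [map_smul]
        _ = _ := by
              conv_lhs => rw [hb']
              rw [smul_smul]
    add_mem' := by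
      intro a b ha hb
      refine key _ ((inner ℂ v (adjoint a v) : ℂ) + (inner ℂ v (adjoint b v) : ℂ)) ?_
      have ha' : adjoint a v = (inner ℂ v (adjoint a v) : ℂ) • v := ha
      have hb' : adjoint b v = (inner ℂ v (adjoint b v) : ℂ) • v := hb
      rw [map_add, ContinuousLinearMap.add_apply]
      conv_lhs => rw [ha', hb']
      rw [add_smul]
    algebraMap_mem' := by
      intro c
      refine key _ ((starRingEnd ℂ) c) ?_
      have h1 : (algebraMap ℂ (E →L[ℂ] E)) c = c • (1 : E →L[ℂ] E) :=
        Algebra.algebraMap_eq_smul_one c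
      have h2 : adjoint (1 : E →L[ℂ] E) = 1 := by
        rw [← star_eq_adjoint, star_one]
      rw [h1, map_smulₛₗ, h2]
      simp }
  have hadj : Algebra.adjoin ℂ s ≤ T := Algebra.adjoin_le hs
  intro a ha
  have h2 : closure ((Algebra.adjoin ℂ s : Subalgebra ℂ (E →L[ℂ] E)) : Set _) ⊆ S :=
    closure_minimal (fun x hx => hadj hx) hSclosed
  exact h2 ha

set_option synthInstance.maxHeartbeats 1000000 in
set_option maxHeartbeats 1000000 in
/-- With `v = v_λ` the eigenvector of the adjoints of the creation operators on the full
Fock space, the functional `ρ(A) = ⟨A v, v⟩` is multiplicative on the norm-closed unital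
algebra generated by `L₁, …, Lₙ`, and `ρ(Lᵢ) = λᵢ`. -/
theorem stmt15 (n : ℕ) (lam : Fin n → ℂ) (hlam : ∑ i, ‖lam i‖ ^ 2 < 1)
    (L : Fin n →
      (lp (fun _ : List (Fin n) => ℂ) 2 →L[ℂ] lp (fun _ : List (Fin n) => ℂ) 2))
    (hL : ∀ (i : Fin n) (w : List (Fin n)),
      L i (lp.single 2 w 1) = lp.single 2 (i :: w) 1)
    (v : lp (fun _ : List (Fin n) => ℂ) 2) (hv : ‖v‖ = 1)
    (heig : ∀ i, ContinuousLinearMap.adjoint (L i) v = (starRingEnd ℂ) (lam i) • v) :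
    (∀ a b, a ∈ (Algebra.adjoin ℂ (Set.range L)).topologicalClosure →
        b ∈ (Algebra.adjoin ℂ (Set.range L)).topologicalClosure →
        (inner ℂ v ((a * b) v) : ℂ) = (inner ℂ v (a v) : ℂ) * (inner ℂ v (b v) : ℂ)) ∧
      ∀ i, (inner ℂ v (L i v) : ℂ) = lam i := by
  have hvv : (inner ℂ v v : ℂ) = 1 := by
    rw [inner_self_eq_norm_sq_to_K, hv]; norm_num
  have rho : ∀ (a : lp (fun _ : List (Fin n) => ℂ) 2 →L[ℂ] lp (fun _ : List (Fin n) => ℂ) 2)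
      (μ : ℂ), ContinuousLinearMap.adjoint a v = μ • v →
      (inner ℂ v (a v) : ℂ) = (starRingEnd ℂ) μ := by
    intro a μ h
    rw [← ContinuousLinearMap.adjoint_inner_left, h, inner_smul_left, hvv, mul_one]
  have hs : ∀ a ∈ Set.range L, ContinuousLinearMap.adjoint a v
      = (inner ℂ v (ContinuousLinearMap.adjoint a v) : ℂ) • v := by
    rintro _ ⟨i, rfl⟩
    rw [heig i, inner_smul_right, hvv, mul_one]
  have hall := aux_eig v hvv (Set.range L) hs
  constructor
  · intro a b ha hb
    have ha' := hall a ha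
    have hb' := hall b hb
    set α := (inner ℂ v (ContinuousLinearMap.adjoint a v) : ℂ) with hα
    set β := (inner ℂ v (ContinuousLinearMap.adjoint b v) : ℂ) with hβ
    have hav : (inner ℂ v (a v) : ℂ) = (starRingEnd ℂ) α := rho a α ha'
    have hbv : (inner ℂ v (b v) : ℂ) = (starRingEnd ℂ) β := rho b β hb'
    have habv : ContinuousLinearMap.adjoint (a * b) v = (α * β) • v := by
      have hmul : ContinuousLinearMap.adjoint (a * b)
          = ContinuousLinearMap.adjoint b * ContinuousLinearMap.adjoint a := by
        rw [← ContinuousLinearMap.star_eq_adjoint, ← ContinuousLinearMap.star_eq_adjoint,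
          ← ContinuousLinearMap.star_eq_adjoint, star_mul]
      rw [hmul]
      calc (ContinuousLinearMap.adjoint b * ContinuousLinearMap.adjoint a) v
          = ContinuousLinearMap.adjoint b (ContinuousLinearMap.adjoint a v) := rfl
        _ = α • ContinuousLinearMap.adjoint b v := by
              conv_lhs => rw [ha']
              rw [map_smul]
        _ = (α * β) • v := by
              conv_lhs => rw [hb']
              rw [smul_smul, mul_comm]
    rw [rho (a * b) (α * β) habv, hav, hbv, map_mul]
  · intro i
    have := rho (L i) ((starRingEnd ℂ) (lam i)) (heig i)
    simpa using this
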